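/- (Proposition 1(2), distance of the reflected code) Let M ≥ 0, w ≥ 1, and let T₁, …, T_k ⊆ {0, 1, …, M} be finite sets of size w such that each Δ⁺(T_i) has exactly w(w−1)/2 elements and the Δ⁺(T_i) are pairwise disjoint. Let π be a permutation of {1, …, k} and define the reflected supports U_i = {M − t : t ∈ T_{π(i)}} with indicator polynomials p_i = Σ_{u ∈ U_i} D^u ∈ F₂[D, D⁻¹]. Then the minimum over all nonzero tuples (c₁, …, c_k, c_{k+1}) ∈ F₂[D, D⁻¹]^{k+1} satisfying Σ_{i=1}^k p_i · c_i + c_{k+1} = 0 of the total Hamming weight Σ_{j=1}^{k+1} wt(c_j) equals w + 1; that is, the reflected systematic code has the same free distance w + 1 as the original code. -/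

import Mathlib

open LaurentPolynomial

/-- The positive difference set of a finite set of integers:
`Δ⁺(T) = {t' − t : t, t' ∈ T, t' > t}`. -/
def posDiff (T : Finset ℤ) : Finset ℤ :=
  ((T ×ˢ T).filter (fun p => p.1 < p.2)).image (fun p => p.2 - p.1)

/-- The Hamming weight of a Laurent polynomial over `F₂`: the number of its nonzero
coefficients. -/
noncomputable def wt (c : LaurentPolynomial (ZMod 2)) : ℕ := c.coeff.support.card


lemma mem_posDiff {T : Finset ℤ} {d : ℤ} :
    d ∈ posDiff T ↔ ∃ t ∈ T, ∃ t' ∈ T, t < t' ∧ t' - t = d := by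
  simp only [posDiff, Finset.mem_image, Finset.mem_filter, Finset.mem_product]
  constructor
  · rintro ⟨⟨x, y⟩, ⟨⟨hx, hy⟩, hlt⟩, rfl⟩
    exact ⟨x, hx, y, hy, hlt, rfl⟩
  · rintro ⟨t, ht, t', ht', hlt, rfl⟩
    exact ⟨(t, t'), ⟨⟨ht, ht'⟩, hlt⟩, rfl⟩

lemma posDiff_reflect (T : Finset ℤ) (M : ℤ) :
    posDiff (T.image (fun t => M - t)) = posDiff T := by
  ext d
  simp only [mem_posDiff, Finset.mem_image]
  constructor
  · rintro ⟨x, ⟨t, ht, rfl⟩, y, ⟨t', ht', rfl⟩, hlt, rfl⟩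
    exact ⟨t', ht', t, ht, by omega, by omega⟩
  · rintro ⟨t, ht, t', ht', hlt, rfl⟩
    exact ⟨M - t', ⟨t', ht', rfl⟩, M - t, ⟨t, ht, rfl⟩, by omega, by omega⟩

lemma two_mul_filter_lt_card (T : Finset ℤ) :
    2 * ((T ×ˢ T).filter (fun p => p.1 < p.2)).card = T.card * T.card - T.card := by
  have h1 : ((T ×ˢ T).filter (fun p => p.1 < p.2)).card
      = ((T ×ˢ T).filter (fun p => p.2 < p.1)).card := by
    apply Finset.card_bij (fun p _ => Prod.swap p)
    · rintro ⟨x, y⟩ hp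
      simp only [Finset.mem_filter, Finset.mem_product] at hp ⊢
      exact ⟨⟨hp.1.2, hp.1.1⟩, hp.2⟩
    · rintro ⟨x, y⟩ _ ⟨z, u⟩ _ h
      simpa [Prod.ext_iff, and_comm] using h
    · rintro ⟨x, y⟩ hp
      simp only [Finset.mem_filter, Finset.mem_product] at hp ⊢
      exact ⟨(y, x), ⟨⟨hp.1.2, hp.1.1⟩, hp.2⟩, rfl⟩
  have h2 : ((T ×ˢ T).filter (fun p => p.1 < p.2)) ∪ ((T ×ˢ T).filter (fun p => p.2 < p.1))
      = T.offDiag := by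
    rw [← Finset.filter_or]
    rw [show T.offDiag = (T ×ˢ T).filter (fun p => p.1 ≠ p.2) by
      ext ⟨x, y⟩; simp [Finset.mem_offDiag, and_assoc]]
    apply Finset.filter_congr
    rintro ⟨x, y⟩ _
    simp only [ne_eq]
    constructor
    · rintro (h | h) rfl <;> omega
    · intro h; omega
  have h3 : Disjoint ((T ×ˢ T).filter (fun p => p.1 < p.2))
      ((T ×ˢ T).filter (fun p => p.2 < p.1)) := by
    rw [Finset.disjoint_left]
    rintro ⟨x, y⟩ hp hq
    simp only [Finset.mem_filter] at hp hq
    omega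
  have := Finset.card_union_of_disjoint h3
  rw [h2, Finset.offDiag_card] at this
  omega

lemma diff_unique (T : Finset ℤ) (w : ℕ) (hcard : T.card = w)
    (hfull : (posDiff T).card = w * (w - 1) / 2) :
    ∀ a ∈ T, ∀ b ∈ T, ∀ c ∈ T, ∀ d ∈ T, b - a = d - c → a ≠ b → a = c ∧ b = d := by
  have h2 := two_mul_filter_lt_card T
  rw [hcard] at h2
  have hww : w * (w - 1) = w * w - w := by
    cases w with
    | zero => rfl
    | succ n =>
      have h1 : (n + 1) * (n + 1) = (n + 1) * n + (n + 1) := by ring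
      simp only [Nat.succ_sub_one]
      omega
  have hsrc : ((T ×ˢ T).filter (fun p => p.1 < p.2)).card = w * (w - 1) / 2 := by omega
  have hinj : Set.InjOn (fun p : ℤ × ℤ => p.2 - p.1)
      ((T ×ˢ T).filter (fun p => p.1 < p.2)) := by
    rw [← Finset.card_image_iff]
    show (posDiff T).card = _
    rw [hfull, hsrc]
  intro a ha b hb c hc d hd heq hne
  rcases lt_or_gt_of_ne hne with hlt | hgt
  · have hcd : c < d := by omega
    have h := hinj (by simp [Finset.mem_coe, Finset.mem_filter, Finset.mem_product, ha, hb, hlt])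
      (by simp [Finset.mem_coe, Finset.mem_filter, Finset.mem_product, hc, hd, hcd])
      (show (a, b).2 - (a, b).1 = (c, d).2 - (c, d).1 by simpa using heq)
    exact ⟨congrArg Prod.fst h, congrArg Prod.snd h⟩
  · have hdc : d < c := by omega
    have h := hinj (by simp [Finset.mem_coe, Finset.mem_filter, Finset.mem_product, ha, hb, hgt])
      (by simp [Finset.mem_coe, Finset.mem_filter, Finset.mem_product, hc, hd, hdc])
      (show (b, a).2 - (b, a).1 = (d, c).2 - (d, c).1 by simp; omega)
    exact ⟨congrArg Prod.snd h, congrArg Prod.fst h⟩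

lemma T_mul_apply (u : ℤ) (c : LaurentPolynomial (ZMod 2)) (y : ℤ) :
    ((T u : LaurentPolynomial (ZMod 2)) * c).coeff y = c.coeff (y - u) := by
  have h := AddMonoidAlgebra.coeff_single_mul_apply (R := ZMod 2) (G := ℤ) c 1 u y
  rw [one_mul] at h
  rw [show (T u : LaurentPolynomial (ZMod 2)) = AddMonoidAlgebra.single u 1 from rfl, h,
    neg_add_eq_sub]

lemma sum_T_apply (U : Finset ℤ) (y : ℤ) :
    (∑ u ∈ U, (T u : LaurentPolynomial (ZMod 2))).coeff y = if y ∈ U then 1 else 0 := by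
  rw [AddMonoidAlgebra.coeff_sum, Finsupp.finset_sum_apply]
  simp only [T_apply]
  exact Finset.sum_ite_eq' U y (fun _ => 1)

lemma support_sum_T (U : Finset ℤ) :
    (∑ u ∈ U, (T u : LaurentPolynomial (ZMod 2))).coeff.support = U := by
  ext y
  rw [Finsupp.mem_support_iff, sum_T_apply]
  split <;> simp_all

lemma big_apply {k : ℕ} (U : Fin k → Finset ℤ) (c : Fin k → LaurentPolynomial (ZMod 2))
    (y : ℤ) :
    (∑ j, (∑ u ∈ U j, (T u : LaurentPolynomial (ZMod 2))) * c j).coeff y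
      = ∑ j, ∑ u ∈ U j, (c j).coeff (y - u) := by
  rw [AddMonoidAlgebra.coeff_sum, Finsupp.finset_sum_apply]
  refine Finset.sum_congr rfl (fun j _ => ?_)
  rw [Finset.sum_mul, AddMonoidAlgebra.coeff_sum, Finsupp.finset_sum_apply]
  exact Finset.sum_congr rfl (fun u _ => T_mul_apply u (c j) y)

lemma key {w k : ℕ} (U : Fin k → Finset ℤ)
    (hcardU : ∀ i, (U i).card = w)
    (huniq : ∀ i, ∀ a ∈ U i, ∀ b ∈ U i, ∀ c' ∈ U i, ∀ d ∈ U i,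
        b - a = d - c' → a ≠ b → a = c' ∧ b = d)
    (hcross : ∀ i j : Fin k, i ≠ j → ∀ a ∈ U i, ∀ b ∈ U i, ∀ c' ∈ U j, ∀ d ∈ U j,
        b - a = d - c' → a = b)
    (c : Fin k → LaurentPolynomial (ZMod 2)) (i : Fin k) (hci : c i ≠ 0) :
    w + 1 ≤ (∑ j, wt (c j))
      + wt (∑ j, (∑ u ∈ U j, (T u : LaurentPolynomial (ZMod 2))) * c j) := by
  classical
  obtain ⟨a, ha⟩ := Finset.nonempty_iff_ne_empty.mpr
    (fun h => hci (AddMonoidAlgebra.coeff_eq_zero.mp (Finsupp.support_eq_empty.mp h)))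
  set q := ∑ j, (∑ u ∈ U j, (T u : LaurentPolynomial (ZMod 2))) * c j with hqdef
  set S : Finset ((_ : Fin k) × ℤ) := Finset.univ.sigma (fun j => (c j).coeff.support) with hS
  have hScard : S.card = ∑ j, wt (c j) := Finset.card_sigma _ _
  have hiaS : (⟨i, a⟩ : (_ : Fin k) × ℤ) ∈ S := by
    simp only [hS, Finset.mem_sigma, Finset.mem_univ, true_and]; exact ha
  have claim : ∀ u, ∃ jb : (_ : Fin k) × ℤ, u ∈ U i → (a + u) ∉ q.coeff.support →
      jb ∈ S.erase ⟨i, a⟩ ∧ ∃ u' ∈ U jb.1, u' + jb.2 = u + a := by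
    intro u
    by_cases hu : u ∈ U i
    swap
    · exact ⟨⟨i, a⟩, fun h => absurd h hu⟩
    by_cases hnot : (a + u) ∈ q.coeff.support
    · exact ⟨⟨i, a⟩, fun _ h => absurd hnot h⟩
    have hmain : ∃ jb : (_ : Fin k) × ℤ, jb ∈ S.erase ⟨i, a⟩ ∧
        ∃ u' ∈ U jb.1, u' + jb.2 = u + a := by
      by_contra hno
      push_neg at hno
      have hterm : ∀ j, ∀ u' ∈ U j, ¬(j = i ∧ u' = u) → (c j).coeff (a + u - u') = 0 := by
        intro j u' hu' hne
        by_contra hcz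
        have hmem : (⟨j, a + u - u'⟩ : (_ : Fin k) × ℤ) ∈ S.erase ⟨i, a⟩ := by
          refine Finset.mem_erase.mpr ⟨?_, ?_⟩
          · intro hEq
            rcases Sigma.mk.inj_iff.mp hEq with ⟨rfl, hb⟩
            have : u' = u := by
              have := eq_of_heq hb; omega
            exact hne ⟨rfl, this⟩
          · simp only [hS, Finset.mem_sigma, Finset.mem_univ, true_and]
            exact Finsupp.mem_support_iff.mpr hcz
        exact hno ⟨j, a + u - u'⟩ hmem u' hu' (by ring)
      have h0 : (∑ j, ∑ u' ∈ U j, (c j).coeff (a + u - u')) = 0 := by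
        rw [← big_apply]
        exact Finsupp.notMem_support_iff.mp hnot
      rw [Finset.sum_eq_single_of_mem i (Finset.mem_univ i)
        (fun j _ hne => Finset.sum_eq_zero
          (fun u' hu' => hterm j u' hu' (fun h => hne h.1)))] at h0
      rw [Finset.sum_eq_single_of_mem u hu
        (fun u' hu' hne => hterm i u' hu' (fun h => hne h.2))] at h0
      rw [show a + u - u = a by ring] at h0
      exact Finsupp.mem_support_iff.mp ha h0
    obtain ⟨jb, h1, h2⟩ := hmain
    exact ⟨jb, fun _ _ => ⟨h1, h2⟩⟩
  choose f hf using claim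
  set A := (U i).filter (fun u => (a + u) ∉ q.coeff.support) with hA
  set B := (U i).filter (fun u => (a + u) ∈ q.coeff.support) with hB
  have hAB : B.card + A.card = w := by
    rw [hA, hB, ← hcardU i]
    exact Finset.card_filter_add_card_filter_not _
  have hAcard : A.card ≤ S.card - 1 := by
    have h1 : A.card ≤ (S.erase ⟨i, a⟩).card := by
      apply Finset.card_le_card_of_injOn f
      · intro u hu
        rw [Finset.mem_coe, hA, Finset.mem_filter] at hu
        exact ((hf u) hu.1 hu.2).1
      · intro u₁ hu₁ u₂ hu₂ heq
        rw [Finset.mem_coe, hA, Finset.mem_filter] at hu₁ hu₂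
        obtain ⟨hm₁, u₁', hu₁'U, hu₁'e⟩ := (hf u₁) hu₁.1 hu₁.2
        obtain ⟨hm₂, u₂', hu₂'U, hu₂'e⟩ := (hf u₂) hu₂.1 hu₂.2
        rw [← heq] at hu₂'U hu₂'e
        by_contra hne
        rcases hfu : f u₁ with ⟨j, b⟩
        rw [hfu] at hm₁ hu₁'U hu₁'e hu₂'U hu₂'e
        simp only at hu₁'U hu₁'e hu₂'U hu₂'e
        by_cases hji : j = i
        · subst hji
          obtain ⟨he₁, he₂⟩ := huniq j u₂ hu₂.1 u₁ hu₁.1 u₂' hu₂'U u₁' hu₁'U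
            (by omega) (Ne.symm hne)
          have hb : b = a := by omega
          exact (Finset.mem_erase.mp hm₁).1 (by rw [hb])
        · exact hne ((hcross i j (fun h => hji h.symm) u₂ hu₂.1 u₁ hu₁.1 u₂' hu₂'U u₁' hu₁'U
            (by omega)).symm)
    rw [Finset.card_erase_of_mem hiaS] at h1
    exact h1
  have hBcard : B.card ≤ wt q := by
    apply Finset.card_le_card_of_injOn (fun u => a + u)
    · intro u hu
      rw [Finset.mem_coe, hB, Finset.mem_filter] at hu
      exact hu.2
    · intro u₁ _ u₂ _ h
      exact add_left_cancel h
  have hS1 : 1 ≤ S.card := Finset.card_pos.mpr ⟨_, hiaS⟩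
  rw [← hScard]
  omega

lemma lp_add_self (x : LaurentPolynomial (ZMod 2)) : x + x = 0 := by
  ext n
  rw [AddMonoidAlgebra.coeff_add, Finsupp.add_apply, AddMonoidAlgebra.coeff_zero, Finsupp.zero_apply]
  exact CharTwo.add_self_eq_zero _

lemma wt_one : wt 1 = 1 := by
  have : (1 : LaurentPolynomial (ZMod 2)) = ∑ u ∈ ({0} : Finset ℤ), (T u : LaurentPolynomial (ZMod 2)) := by
    simp
  rw [wt, this, support_sum_T]
  rfl

/-- Proposition 1(2), distance of the reflected code. -/
theorem reflected_code_free_distance (M : ℕ) (w k : ℕ) (hw : 1 ≤ w) (hk : 1 ≤ k)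
    (T : Fin k → Finset ℤ)
    (hsub : ∀ i, T i ⊆ Finset.Icc 0 (M : ℤ))
    (hcard : ∀ i, (T i).card = w)
    (hfull : ∀ i, (posDiff (T i)).card = w * (w - 1) / 2)
    (hdisj : ∀ i j : Fin k, i ≠ j → Disjoint (posDiff (T i)) (posDiff (T j)))
    (π : Equiv.Perm (Fin k)) (U : Fin k → Finset ℤ)
    (hU : ∀ i, U i = (T (π i)).image (fun t => (M : ℤ) - t))
    (p : Fin k → LaurentPolynomial (ZMod 2))
    (hp : ∀ i, p i = ∑ u ∈ U i, LaurentPolynomial.T u) :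
    IsLeast {d : ℕ | ∃ c : Fin (k + 1) → LaurentPolynomial (ZMod 2), c ≠ 0 ∧
        (∑ i : Fin k, p i * c i.castSucc) + c (Fin.last k) = 0 ∧
        d = ∑ j, wt (c j)} (w + 1) := by
  classical
  have hUcard : ∀ i, (U i).card = w := by
    intro i
    rw [hU i, Finset.card_image_of_injective _ (sub_right_injective), hcard]
  have hUpos : ∀ i, posDiff (U i) = posDiff (T (π i)) := fun i => by
    rw [hU i]; exact posDiff_reflect _ _
  have hwtp : ∀ i, wt (p i) = w := by
    intro i
    rw [wt, hp i, support_sum_T, hUcard]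
  constructor
  · -- membership : w + 1 is attained
    set i0 : Fin k := ⟨0, hk⟩ with hi0
    have hne : Fin.castSucc i0 ≠ Fin.last k := by
      intro h
      have h' : (0 : ℕ) = k := congrArg Fin.val h
      omega
    refine ⟨fun j => if j = Fin.castSucc i0 then 1 else if j = Fin.last k then p i0 else 0,
      ?_, ?_, ?_⟩
    · intro h
      have h2 := congrFun h (Fin.castSucc i0)
      simp only [if_pos rfl, Pi.zero_apply] at h2
      exact one_ne_zero h2
    · rw [Finset.sum_eq_single_of_mem i0 (Finset.mem_univ _) ?_]
      · simp [Ne.symm hne, lp_add_self]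
      · intro j _ hji
        have h1 : Fin.castSucc j ≠ Fin.castSucc i0 := fun h => hji (Fin.castSucc_injective _ h)
        have h2 : Fin.castSucc j ≠ Fin.last k := (Fin.castSucc_lt_last j).ne
        simp [h1, h2]
    · rw [← Finset.sum_subset (Finset.subset_univ {Fin.castSucc i0, Fin.last k})
        (fun x _ hx => ?_)]
      · rw [Finset.sum_pair hne]
        simp [Ne.symm hne, wt_one, hwtp i0]
        omega
      · simp only [Finset.mem_insert, Finset.mem_singleton, not_or] at hx
        simp [hx.1, hx.2, wt]
  · -- lower bound
    rintro d ⟨c, hc0, heq, rfl⟩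
    have hex : ∃ i : Fin k, c (Fin.castSucc i) ≠ 0 := by
      by_contra hall
      push_neg at hall
      apply hc0
      have hlast : c (Fin.last k) = 0 := by
        rw [Finset.sum_eq_zero (fun i _ => by rw [hall i, mul_zero]), zero_add] at heq
        exact heq
      funext j
      rcases Fin.eq_castSucc_or_eq_last j with ⟨i, rfl⟩ | rfl
      · exact hall i
      · exact hlast
    obtain ⟨i, hi⟩ := hex
    have huniq : ∀ i, ∀ a ∈ U i, ∀ b ∈ U i, ∀ c' ∈ U i, ∀ d ∈ U i,
        b - a = d - c' → a ≠ b → a = c' ∧ b = d := by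
      intro i
      exact diff_unique (U i) w (hUcard i) (by rw [hUpos i]; exact hfull (π i))
    have hcross : ∀ i j : Fin k, i ≠ j → ∀ a ∈ U i, ∀ b ∈ U i, ∀ c' ∈ U j, ∀ d ∈ U j,
        b - a = d - c' → a = b := by
      intro i j hij a ha b hb c' hc' d hd hdiff
      by_contra hab
      have hdisjU : Disjoint (posDiff (U i)) (posDiff (U j)) := by
        rw [hUpos i, hUpos j]
        exact hdisj _ _ (fun h => hij (π.injective h))
      rcases lt_or_gt_of_ne hab with h | h
      · have h1 : b - a ∈ posDiff (U i) := mem_posDiff.mpr ⟨a, ha, b, hb, h, rfl⟩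
        have h2 : b - a ∈ posDiff (U j) := mem_posDiff.mpr ⟨c', hc', d, hd, by omega, by omega⟩
        exact (Finset.disjoint_left.mp hdisjU h1) h2
      · have h1 : a - b ∈ posDiff (U i) := mem_posDiff.mpr ⟨b, hb, a, ha, h, rfl⟩
        have h2 : a - b ∈ posDiff (U j) := mem_posDiff.mpr ⟨d, hd, c', hc', by omega, by omega⟩
        exact (Finset.disjoint_left.mp hdisjU h1) h2
    have hkey := key U hUcard huniq hcross (fun i => c (Fin.castSucc i)) i hi
    have hq : (∑ j, (∑ u ∈ U j, (LaurentPolynomial.T u : LaurentPolynomial (ZMod 2))) * c (Fin.castSucc j))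
        = c (Fin.last k) := by
      have h1 : (∑ j, (∑ u ∈ U j, (LaurentPolynomial.T u : LaurentPolynomial (ZMod 2))) * c (Fin.castSucc j))
          = ∑ j, p j * c (Fin.castSucc j) :=
        Finset.sum_congr rfl (fun j _ => by rw [hp j])
      have h2 := congrArg (· + c (Fin.last k)) heq
      simp only [zero_add] at h2
      rw [add_assoc, lp_add_self, add_zero] at h2
      rw [h1, h2]
    rw [hq] at hkey
    rw [Fin.sum_univ_castSucc (f := fun j => wt (c j))]
    exact hkey
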